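/- Let M be a popular matching in a bipartite instance H with witness α ∈ {0,±1}^n. If u is an unstable vertex of H (i.e., unmatched in some, equivalently every, stable matching of H), then α_u = 0 if u is unmatched in M, and α_u = −1 if u is matched in M. -/
import Mathlib


open Finset

section Defs
variable {V : Type*}

/-- A matching given as a partial partner function: if `M u = some v` then
`(u,v)` is an edge and `v`'s partner is `u`. -/
def IsMatching (adj : V → V → Prop) (M : V → Option V) : Prop :=
  ∀ u v, M u = some v → adj u v ∧ M v = some u

/-- Vertex `u` prefers matching `M` to `M'`: matched in `M` and unmatched in `M'`,
or matched in both and prefers its `M`-partner. -/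
def PrefersM (pref : V → V → V → Bool) (M M' : V → Option V) (u : V) : Bool :=
  match M u, M' u with
  | some a, some b => pref u a b
  | some _, none => true
  | _, _ => false

/-- `phiM pref M M'` = number of vertices preferring `M` to `M'`. -/
def phiM [Fintype V] (pref : V → V → V → Bool) (M M' : V → Option V) : ℕ :=
  (Finset.univ.filter fun u => PrefersM pref M M' u = true).card

/-- `M` is popular: no matching is preferred by strictly more vertices. -/
def Popular [Fintype V] (adj : V → V → Prop) (pref : V → V → V → Bool)
    (M : V → Option V) : Prop :=
  ∀ M', IsMatching adj M' → phiM pref M' M ≤ phiM pref M M'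

/-- `a` prefers `b` to its assignment under `M` (being unmatched is worst). -/
def PrefOver (pref : V → V → V → Bool) (M : V → Option V) (a b : V) : Prop :=
  match M a with
  | none => True
  | some c => pref a b c = true

/-- `(a,b)` is a blocking edge with respect to `M`. -/
def Blocking (adj : V → V → Prop) (pref : V → V → V → Bool) (M : V → Option V)
    (a b : V) : Prop :=
  adj a b ∧ PrefOver pref M a b ∧ PrefOver pref M b a

/-- Number of matched vertices (twice the number of edges of `M`). -/
def msize [Fintype V] (M : V → Option V) : ℕ :=
  (Finset.univ.filter fun u => (M u).isSome = true).card

/-- `vote u v v'` where `u` itself encodes "unmatched"; every vertex regards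
itself as strictly worse than any neighbor. -/
def vote [DecidableEq V] (pref : V → V → V → Bool) (u v v' : V) : ℤ :=
  if v = v' then 0
  else if v' = u then 1
  else if v = u then -1
  else if pref u v v' then 1 else -1

/-- `wt_M(a,b) = vote_a(b, M̃(a)) + vote_b(a, M̃(b))`. -/
def wtEdge [DecidableEq V] (pref : V → V → V → Bool) (M : V → Option V) (a b : V) : ℤ :=
  vote pref a b ((M a).getD a) + vote pref b a ((M b).getD b)

/-- `wt_M(u,u)`: 0 if `u` is unmatched in `M`, else −1. -/
def wtSelf (M : V → Option V) (u : V) : ℤ :=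
  if (M u).isSome then -1 else 0

end Defs

/-- If `M` is a popular matching in a bipartite instance with an integral
witness `α ∈ {0,±1}^n` and `u` is an unstable vertex (unmatched in some stable
matching), then `α_u = 0` if `u` is unmatched in `M` and `α_u = −1` otherwise. -/
theorem unstable_vertex_witness {V : Type*} [Fintype V] [DecidableEq V]
    (adj : V → V → Prop) (hsymm : ∀ u v, adj u v → adj v u) (hadjirr : ∀ u, ¬ adj u u)
    (side : V → Bool) (hbip : ∀ u v, adj u v → side u ≠ side v)
    (pref : V → V → V → Bool)
    (hpirr : ∀ u a, pref u a a = false)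
    (hasym : ∀ u a b, pref u a b = true → pref u b a = false)
    (htrans : ∀ u a b c, pref u a b = true → pref u b c = true → pref u a c = true)
    (htot : ∀ u a b, adj u a → adj u b → a ≠ b → pref u a b = true ∨ pref u b a = true)
    (M : V → Option V) (hM : IsMatching adj M) (hpop : Popular adj pref M)
    (α : V → ℤ) (hval : ∀ v, α v = 0 ∨ α v = 1 ∨ α v = -1)
    (hsum : ∑ u : V, α u = 0)
    (hedge : ∀ a b, adj a b → α a + α b ≥ wtEdge pref M a b)
    (hself : ∀ u, α u ≥ wtSelf M u)
    (u : V)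
    (hunstable : ∃ S, IsMatching adj S ∧ (∀ a b, ¬ Blocking adj pref S a b) ∧ S u = none) :
    (M u = none → α u = 0) ∧ ((M u).isSome → α u = -1) := by
  obtain ⟨S, hS, hstab, hSu⟩ := hunstable
  set g : V → ℤ := fun v => vote pref v ((S v).getD v) ((M v).getD v) with hg
  have hMne : ∀ v w, M v = some w → v ≠ w := by
    intro v w h hvw
    exact hadjirr v (hvw ▸ (hM v w h).1)
  have hSne : ∀ v w, S v = some w → v ≠ w := by
    intro v w h hvw
    exact hadjirr v (hvw ▸ (hS v w h).1)
  -- value of g at S-unmatched vertices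
  have hg_none : ∀ v, S v = none → g v = wtSelf M v := by
    intro v hv
    simp only [hg, hv, Option.getD_none]
    cases hMv : M v with
    | none => simp [vote, wtSelf, hMv]
    | some m =>
      have hvm : v ≠ m := hMne v m hMv
      simp [vote, wtSelf, hMv, hvm, Ne.symm hvm]
  -- g is nonnegative at M-unmatched vertices
  have hg_Mnone : ∀ v, M v = none → 0 ≤ g v := by
    intro v hv
    simp only [hg, hv, Option.getD_none]
    cases hSv : S v with
    | none => simp [vote]
    | some w =>
      have hvw : v ≠ w := hSne v w hSv
      simp [vote, hSv, hvw, Ne.symm hvw]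
  -- pair bound on M-edges, using stability of S
  have hpair : ∀ v w, M v = some w → 0 ≤ g v + g w := by
    intro v w hvw
    have hwv := (hM v w hvw).2
    have hadj : adj v w := (hM v w hvw).1
    have hvne : v ≠ w := hMne v w hvw
    by_cases hSvw : S v = some w
    · have hSwv := (hS v w hSvw).2
      simp [hg, hSvw, hSwv, hvw, hwv, vote]
    · have hSwv : S w ≠ some v := fun h => hSvw ((hS w v h).2)
      have key : ∀ a b, M a = some b → S a ≠ some b → a ≠ b → adj a b →
          g a = 1 ∨ (g a = -1 ∧ PrefOver pref S a b) := by
        intro a b hab hSab hne hadjab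
        cases hSa : S a with
        | none =>
          right
          constructor
          · simp [hg, hSa, hab, vote, hne, Ne.symm hne]
          · simp [PrefOver, hSa]
        | some c =>
          have hcb : c ≠ b := fun h => hSab (h ▸ hSa)
          have hca : c ≠ a := fun h => hSne a c hSa h.symm
          have hadjac : adj a c := (hS a c hSa).1
          simp only [hg, hSa, hab, Option.getD_some]
          by_cases hp : pref a c b = true
          · left; simp [vote, hcb, Ne.symm hne, hca, hp]
          · right
            constructor
            · simp [vote, hcb, Ne.symm hne, hca, hp]
            · have htc := htot a b c hadjab hadjac (Ne.symm hcb)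
              have : pref a b c = true := by
                rcases htc with h | h
                · exact h
                · exact absurd h hp
              simp [PrefOver, hSa, this]
      have kv := key v w hvw hSvw hvne hadj
      have kw := key w v hwv hSwv (Ne.symm hvne) (hsymm v w hadj)
      rcases kv with h1 | ⟨h1, hp1⟩
      · rcases kw with h2 | ⟨h2, _⟩ <;> rw [h1, h2] <;> norm_num
      · rcases kw with h2 | ⟨h2, hp2⟩
        · rw [h1, h2]; norm_num
        · exact absurd ⟨hadj, hp1, hp2⟩ (hstab v w)
  -- involutions
  set σ : V → V := fun v => (S v).getD v with hσ
  set τ : V → V := fun v => (M v).getD v with hτ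
  have hσinv : Function.Involutive σ := by
    intro v
    cases hSv : S v with
    | none => simp [hσ, hSv]
    | some w => simp [hσ, hSv, (hS v w hSv).2]
  have hτinv : Function.Involutive τ := by
    intro v
    cases hMv : M v with
    | none => simp [hτ, hMv]
    | some w => simp [hτ, hMv, (hM v w hMv).2]
  -- ∑ g ≥ 0
  have hsum_g : 0 ≤ ∑ v : V, g v := by
    have h2 : 0 ≤ ∑ v : V, (g v + g (τ v)) := by
      apply Finset.sum_nonneg
      intro v _
      cases hMv : M v with
      | none =>
        have := hg_Mnone v hMv
        simp only [hτ, hMv, Option.getD_none]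
        linarith
      | some w =>
        have := hpair v w hMv
        simp only [hτ, hMv, Option.getD_some]
        linarith
    have h3 : ∑ v : V, g (τ v) = ∑ v : V, g v := hτinv.bijective.sum_comp g
    rw [Finset.sum_add_distrib, h3] at h2
    linarith
  -- witness bound on σ-pairs
  have hB : ∀ v, g v + g (σ v) ≤ α v + α (σ v) := by
    intro v
    cases hSv : S v with
    | none =>
      simp only [hσ, hSv, Option.getD_none]
      have h1 := hg_none v hSv
      have h2 := hself v
      linarith
    | some w =>
      have hSwv := (hS v w hSv).2
      have hadj : adj v w := (hS v w hSv).1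
      have hgw : g v + g w = wtEdge pref M v w := by
        simp [hg, wtEdge, hSv, hSwv]
      have := hedge v w hadj
      simp only [hσ, hSv, Option.getD_some]
      linarith
  have hnn : ∀ v ∈ (Finset.univ : Finset V), 0 ≤ α v + α (σ v) - (g v + g (σ v)) := by
    intro v _
    have := hB v
    linarith
  have hT0 : ∑ v : V, (α v + α (σ v) - (g v + g (σ v))) = 0 := by
    have h1 : ∑ v : V, α (σ v) = ∑ v : V, α v := hσinv.bijective.sum_comp α
    have h2 : ∑ v : V, g (σ v) = ∑ v : V, g v := hσinv.bijective.sum_comp g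
    have hle : ∑ v : V, (α v + α (σ v) - (g v + g (σ v))) ≤ 0 := by
      have e : ∑ v : V, (α v + α (σ v) - (g v + g (σ v)))
          = (∑ v : V, α v) + (∑ v : V, α (σ v)) - ((∑ v : V, g v) + (∑ v : V, g (σ v))) := by
        rw [Finset.sum_sub_distrib, Finset.sum_add_distrib, Finset.sum_add_distrib]
      rw [e, h1, h2, hsum]
      linarith
    have hge := Finset.sum_nonneg hnn
    linarith
  have hterm := (Finset.sum_eq_zero_iff_of_nonneg hnn).mp hT0 u (Finset.mem_univ u)
  have hσu : σ u = u := by simp [hσ, hSu]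
  rw [hσu, hg_none u hSu] at hterm
  have hau : α u = wtSelf M u := by linarith
  constructor
  · intro h
    rw [hau]
    simp [wtSelf, h]
  · intro h
    rw [hau]
    simp [wtSelf, h]
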